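/- For any two strings X and Y of the same length n, and any partition points 0 = j_0 < j_1 < ... < j_B = n, there exist integer shifts s_1, ..., s_B such that the sum over i of ED(X[j_{i-1}..j_i), Y[j_{i-1}+s_i .. j_i+s_i)) is at most 2·ED(X, Y), and 2|s_i| ≤ ED(X, Y) for every i. -/

import Mathlib

open Finset

/-- Cost structure for the Levenshtein distance (removed from Mathlib; restored with its old meaning). -/
structure Levenshtein.Cost (α β δ : Type*) where
  delete : α → δ
  insert : β → δ
  substitute : α → β → δ

/-- The default unit cost, as in the old Mathlib `Levenshtein.defaultCost`. -/
def Levenshtein.defaultCost {α : Type*} [DecidableEq α] : Levenshtein.Cost α α ℕ where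
  delete _ := 1
  insert _ := 1
  substitute a b := if a = b then 0 else 1

/-- The Levenshtein distance, characterized by the same equations as the old Mathlib `levenshtein`. -/
def levenshtein {α β δ : Type*} (C : Levenshtein.Cost α β δ) [Min δ] [Add δ] [Zero δ] :
    List α → List β → δ
  | [], [] => 0
  | [], y :: ys => C.insert y + levenshtein C [] ys
  | x :: xs, [] => C.delete x + levenshtein C xs []
  | x :: xs, y :: ys =>
    min (C.delete x + levenshtein C xs (y :: ys))
      (min (C.insert y + levenshtein C (x :: xs) ys) (C.substitute x y + levenshtein C xs ys))

@[simp]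
theorem Levenshtein.defaultCost_delete {α : Type*} [DecidableEq α] (a : α) :
    (Levenshtein.defaultCost : Levenshtein.Cost α α ℕ).delete a = 1 := rfl

@[simp]
theorem Levenshtein.defaultCost_insert {α : Type*} [DecidableEq α] (a : α) :
    (Levenshtein.defaultCost : Levenshtein.Cost α α ℕ).insert a = 1 := rfl

@[simp]
theorem Levenshtein.defaultCost_substitute {α : Type*} [DecidableEq α] (a b : α) :
    (Levenshtein.defaultCost : Levenshtein.Cost α α ℕ).substitute a b = if a = b then 0 else 1 := rfl

@[simp]
theorem levenshtein_nil_nil {α β δ : Type*} (C : Levenshtein.Cost α β δ) [Min δ] [Add δ] [Zero δ] :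
    levenshtein C [] [] = 0 := by
  rw [levenshtein]

theorem levenshtein_nil_cons {α β δ : Type*} {C : Levenshtein.Cost α β δ} [Min δ] [Add δ] [Zero δ]
    (y : β) (ys : List β) :
    levenshtein C [] (y :: ys) = C.insert y + levenshtein C [] ys := by
  rw [levenshtein]

theorem levenshtein_cons_nil {α β δ : Type*} {C : Levenshtein.Cost α β δ} [Min δ] [Add δ] [Zero δ]
    (x : α) (xs : List α) :
    levenshtein C (x :: xs) [] = C.delete x + levenshtein C xs [] := by
  rw [levenshtein]

theorem levenshtein_cons_cons {α β δ : Type*} {C : Levenshtein.Cost α β δ} [Min δ] [Add δ] [Zero δ]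
    (x : α) (xs : List α) (y : β) (ys : List β) :
    levenshtein C (x :: xs) (y :: ys) =
      min (C.delete x + levenshtein C xs (y :: ys))
        (min (C.insert y + levenshtein C (x :: xs) ys) (C.substitute x y + levenshtein C xs ys)) := by
  rw [levenshtein]

/-- Edit distance of two lists (unit-cost Levenshtein distance). -/
def ED {α : Type*} [DecidableEq α] (X Y : List α) : ℕ :=
  levenshtein Levenshtein.defaultCost X Y

/-- Clamped substring `X[a..b)`: out-of-bounds indices are clamped to `[0, |X|)`. -/
def sub {α : Type*} (X : List α) (a b : ℤ) : List α :=
  (X.take b.toNat).drop a.toNat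

/-- Hamming distance between (equal-length) lists. -/
def HD {α : Type*} [DecidableEq α] (X Y : List α) : ℕ :=
  ((X.zip Y).filter (fun p => p.1 ≠ p.2)).length

/-- `A` is an optimal alignment between `X` and `Y`. -/
def IsOptAlign {α : Type*} [DecidableEq α] (X Y : List α) (A : ℕ → ℕ) : Prop :=
  A 0 = 0 ∧ A X.length = Y.length ∧
    (∀ i j, i ≤ j → j ≤ X.length → A i ≤ A j) ∧
    ED X Y = ∑ i ∈ Finset.range X.length,
      ED (sub X i (i + 1)) (sub Y (A i) (A (i + 1)))

namespace EDaux

variable {α : Type*} [DecidableEq α]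

lemma ED_nil_left (Y : List α) : ED [] Y = Y.length := by
  induction Y with
  | nil => simp [ED]
  | cons y Y ih => simp only [ED] at ih ⊢; rw [levenshtein_nil_cons]; simp [ih]; omega

lemma ED_nil_right (X : List α) : ED X [] = X.length := by
  induction X with
  | nil => simp [ED]
  | cons x X ih => simp only [ED] at ih ⊢; rw [levenshtein_cons_nil]; simp [ih]; omega

lemma ED_cons_cons (x y : α) (X Y : List α) :
    ED (x :: X) (y :: Y) = min (1 + ED X (y :: Y))
      (min (1 + ED (x :: X) Y) ((if x = y then 0 else 1) + ED X Y)) := by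
  simp [ED, levenshtein_cons_cons, Levenshtein.defaultCost]

lemma ED_del_le (x : α) (X Y : List α) : ED (x :: X) Y ≤ 1 + ED X Y := by
  cases Y with
  | nil => simp [ED_nil_right]
  | cons y Y => rw [ED_cons_cons]; exact min_le_left _ _

lemma ED_ins_le (X : List α) (y : α) (Y : List α) : ED X (y :: Y) ≤ 1 + ED X Y := by
  cases X with
  | nil => simp [ED_nil_left]
  | cons x X => rw [ED_cons_cons]; exact le_trans (le_trans (min_le_right _ _) (min_le_left _ _)) le_rfl

lemma ED_sub_le (x y : α) (X Y : List α) :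
    ED (x :: X) (y :: Y) ≤ (if x = y then 0 else 1) + ED X Y := by
  rw [ED_cons_cons]; exact le_trans (min_le_right _ _) (min_le_right _ _)

lemma length_le_ED_left (X Y : List α) : X.length ≤ ED X Y + Y.length := by
  induction X generalizing Y with
  | nil => simp
  | cons x X ihX =>
    induction Y with
    | nil => simp [ED_nil_right]
    | cons y Y ihY =>
      rw [ED_cons_cons]
      have h1 := ihX (y :: Y)
      have h2 := ihY
      have h3 := ihX Y
      simp only [List.length_cons] at *
      by_cases h : x = y
      · rw [if_pos h]; omega
      · rw [if_neg h]; omega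

lemma length_le_ED_right (X Y : List α) : Y.length ≤ ED X Y + X.length := by
  induction X generalizing Y with
  | nil => simp [ED_nil_left]
  | cons x X ihX =>
    induction Y with
    | nil => simp
    | cons y Y ihY =>
      rw [ED_cons_cons]
      have h1 := ihX (y :: Y)
      have h2 := ihY
      have h3 := ihX Y
      simp only [List.length_cons] at *
      by_cases h : x = y
      · rw [if_pos h]; omega
      · rw [if_neg h]; omega

lemma ED_le_length_add (X Y : List α) : ED X Y ≤ X.length + Y.length := by
  induction X with
  | nil => simp [ED_nil_left]
  | cons x X ih =>
    have := ED_del_le x X Y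
    simp only [List.length_cons]
    omega


lemma ED_append_right_le (T : List α) : ∀ (X L : List α), ED X (L ++ T) ≤ ED X L + T.length := by
  intro X
  induction X with
  | nil =>
    intro L
    simp [ED_nil_left]
  | cons x X ihX =>
    intro L
    induction L with
    | nil =>
      have := ED_le_length_add (x :: X) T
      simp only [List.nil_append, ED_nil_right, List.length_cons] at this ⊢
      omega
    | cons l L ihL =>
      rw [List.cons_append, ED_cons_cons, ED_cons_cons]
      have h1 := ihX (l :: L)
      have h2 := ihL
      have h3 := ihX L
      rw [List.cons_append] at h1
      by_cases h : x = l
      · rw [if_pos h]; omega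
      · rw [if_neg h]; omega

lemma ED_le_append_right (T : List α) : ∀ (X L : List α), ED X L ≤ ED X (L ++ T) + T.length := by
  intro X
  induction X with
  | nil =>
    intro L
    simp [ED_nil_left]
    omega
  | cons x X ihX =>
    intro L
    induction L with
    | nil =>
      have := length_le_ED_left (x :: X) T
      simp only [List.nil_append, ED_nil_right, List.length_cons] at *
      omega
    | cons l L ihL =>
      rw [List.cons_append, ED_cons_cons, ED_cons_cons]
      have h1 := ihX (l :: L)
      have h2 := ihL
      have h3 := ihX L
      rw [List.cons_append] at h1
      by_cases h : x = l
      · rw [if_pos h]; omega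
      · rw [if_neg h]; omega

lemma ED_split (X2 : List α) : ∀ (X1 Y : List α), ∃ k, k ≤ Y.length ∧
    ED X1 (Y.take k) + ED X2 (Y.drop k) ≤ ED (X1 ++ X2) Y := by
  intro X1
  induction X1 with
  | nil =>
    intro Y
    exact ⟨0, Nat.zero_le _, by simp [ED_nil_left]⟩
  | cons x X1 ih =>
    intro Y
    induction Y with
    | nil =>
      refine ⟨0, le_rfl, ?_⟩
      simp [ED_nil_right]
      omega
    | cons y Y ihY =>
      obtain ⟨k1, hk1, h1⟩ := ih (y :: Y)
      obtain ⟨k2, hk2, h2⟩ := ihY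
      obtain ⟨k3, hk3, h3⟩ := ih Y
      have hrhs : ED ((x :: X1) ++ X2) (y :: Y) =
          min (1 + ED (X1 ++ X2) (y :: Y))
            (min (1 + ED ((x :: X1) ++ X2) Y) ((if x = y then 0 else 1) + ED (X1 ++ X2) Y)) := by
        rw [List.cons_append, ED_cons_cons, ← List.cons_append]
      set b1 := 1 + ED (X1 ++ X2) (y :: Y) with hb1
      set b2 := 1 + ED ((x :: X1) ++ X2) Y with hb2
      set b3 := (if x = y then 0 else 1) + ED (X1 ++ X2) Y with hb3
      rcases le_or_gt b1 (min b2 b3) with h | h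
      · refine ⟨k1, hk1.trans (by simp), ?_⟩
        have hd := ED_del_le x X1 ((y :: Y).take k1)
        rw [hrhs, min_eq_left h, hb1]
        omega
      · rcases le_or_gt b2 b3 with h' | h'
        · refine ⟨k2 + 1, by simpa using hk2, ?_⟩
          have hd := ED_ins_le (x :: X1) y (Y.take k2)
          rw [hrhs, min_eq_right h.le, min_eq_left h', hb2]
          simp only [List.take_succ_cons, List.drop_succ_cons]
          omega
        · refine ⟨k3 + 1, by simpa using hk3, ?_⟩
          have hd := ED_sub_le x y X1 (Y.take k3)
          rw [hrhs, min_eq_right h.le, min_eq_right h'.le, hb3]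
          simp only [List.take_succ_cons, List.drop_succ_cons]
          omega

lemma chain : ∀ (B : ℕ) (F : ℕ → List α) (Y : List α), ∃ k : ℕ → ℕ,
    k 0 = 0 ∧ k (B + 1) = Y.length ∧ (∀ i, k i ≤ k (i + 1)) ∧ (∀ i, k i ≤ Y.length) ∧
    ∑ i ∈ Finset.range (B + 1), ED (F i) ((Y.drop (k i)).take (k (i + 1) - k i))
      ≤ ED ((List.range (B + 1)).map F).flatten Y := by
  intro B
  induction B with
  | zero =>
    intro F Y
    refine ⟨fun i => Nat.casesOn i 0 (fun _ => Y.length), rfl, rfl, ?_, ?_, ?_⟩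
    · intro i; cases i <;> simp
    · intro i; cases i <;> simp
    · rw [Finset.sum_range_one]
      simp [List.range_succ]
  | succ B ih =>
    intro F Y
    obtain ⟨t, ht, hsplit⟩ :=
      ED_split (((List.range (B + 1)).map (fun i => F (i + 1))).flatten) (F 0) Y
    obtain ⟨k', h0', hlen', hmono', hbd', hsum'⟩ := ih (fun i => F (i + 1)) (Y.drop t)
    have hjoin : ((List.range (B + 2)).map F).flatten
        = F 0 ++ ((List.range (B + 1)).map (fun i => F (i + 1))).flatten := by
      rw [show B + 2 = (B + 1) + 1 from rfl, List.range_succ_eq_map]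
      simp [List.map_map, Function.comp_def]
    refine ⟨fun i => Nat.casesOn i 0 (fun m => t + k' m), rfl, ?_, ?_, ?_, ?_⟩
    · show t + k' (B + 1) = Y.length
      rw [hlen', List.length_drop]
      omega
    · intro i
      cases i with
      | zero => show 0 ≤ t + k' 0; omega
      | succ m => show t + k' m ≤ t + k' (m + 1); exact Nat.add_le_add_left (hmono' m) t
    · intro i
      cases i with
      | zero => exact Nat.zero_le _
      | succ m =>
        show t + k' m ≤ Y.length
        have := hbd' m
        rw [List.length_drop] at this
        omega
    · rw [hjoin, Finset.sum_range_succ']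
      have h1 : ED (F 0) ((Y.drop ((fun i => Nat.casesOn i 0 (fun m => t + k' m)) 0)).take
          (((fun i => Nat.casesOn i 0 (fun m => t + k' m)) (0 + 1)) - ((fun i => Nat.casesOn i 0 (fun m => t + k' m)) 0)))
          = ED (F 0) (Y.take t) := by
        show ED (F 0) ((Y.drop 0).take ((t + k' 0) - 0)) = ED (F 0) (Y.take t)
        rw [h0', List.drop_zero, Nat.add_zero, Nat.sub_zero]
      have h2 : ∀ i ∈ Finset.range (B + 1),
          ED (F (i + 1)) ((Y.drop ((fun i => Nat.casesOn i 0 (fun m => t + k' m)) (i + 1))).take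
            (((fun i => Nat.casesOn i 0 (fun m => t + k' m)) (i + 1 + 1)) - ((fun i => Nat.casesOn i 0 (fun m => t + k' m)) (i + 1))))
          = ED (F (i + 1)) (((Y.drop t).drop (k' i)).take (k' (i + 1) - k' i)) := by
        intro i _
        show ED (F (i + 1)) ((Y.drop (t + k' i)).take ((t + k' (i + 1)) - (t + k' i))) = _
        rw [show (t + k' (i + 1)) - (t + k' i) = k' (i + 1) - k' i by omega,
          List.drop_drop]
        try rfl
        try rw [Nat.add_comm (k' i) t]
      rw [Finset.sum_congr rfl h2, h1]
      have := hsum'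
      have := hsplit
      omega

end EDaux

open EDaux in
theorem divide_and_conquer_upper_bound {α : Type*} [DecidableEq α]
    (n B : ℕ) (X Y : List α) (hX : X.length = n) (hY : Y.length = n)
    (j : ℕ → ℕ) (hj0 : j 0 = 0) (hjB : j B = n)
    (hmono : ∀ i < B, j i < j (i + 1)) :
    ∃ s : ℕ → ℤ,
      (∑ i ∈ Finset.range B,
        ED (sub X (j i) (j (i + 1))) (sub Y (j i + s i) (j (i + 1) + s i))
          ≤ 2 * ED X Y) ∧
      ∀ i < B, 2 * (s i).natAbs ≤ ED X Y := by
  cases B with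
  | zero => exact ⟨fun _ => 0, by simp, fun i hi => by omega⟩
  | succ B' =>
    set B := B' + 1 with hBdef
    -- monotonicity facts
    have hstep : ∀ a b : ℕ, a ≤ b → b ≤ B → j a ≤ j b := by
      intro a b hab hbB
      induction b with
      | zero =>
        have : a = 0 := by omega
        rw [this]
      | succ m ihm =>
        rcases Nat.lt_or_ge a (m + 1) with h | h
        · exact le_trans (ihm (by omega) (by omega)) (le_of_lt (hmono m (by omega)))
        · have : a = m + 1 := by omega
          subst this; exact le_rfl
    have hjn : ∀ i, i ≤ B → j i ≤ n := fun i hi => hjB ▸ hstep i B hi le_rfl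
    -- the chunks of X
    set chunk : ℕ → List α := fun i => (X.take (j (i + 1))).drop (j i) with hchunk
    have htake : ∀ m, m ≤ B → ((List.range m).map chunk).flatten = X.take (j m) := by
      intro m hm
      induction m with
      | zero => simp [hj0]
      | succ p ihp =>
        have hple : j p ≤ j (p + 1) := (hmono p (by omega)).le
        rw [List.range_succ, List.map_append]
        simp only [List.flatten_append, List.map_cons, List.map_nil, List.flatten_cons, List.flatten_nil,
          List.append_nil]
        rw [ihp (by omega)]
        simp only [hchunk]
        rw [show X.take (j p) = (X.take (j (p + 1))).take (j p) by
          rw [List.take_take, min_eq_left hple], List.take_append_drop]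
    have hjoin : ((List.range B).map chunk).flatten = X := by
      rw [htake B le_rfl, hjB, ← hX, List.take_length]
    obtain ⟨k, hk0, hkB, hkmono, hkbd, hksum⟩ := chain B' chunk Y
    rw [hjoin] at hksum
    rw [hY] at hkB hkbd
    -- abbreviations
    set E : ℕ → ℕ := fun i => ED (chunk i) ((Y.drop (k i)).take (k (i + 1) - k i)) with hE
    have hksum' : ∑ i ∈ Finset.range B, E i ≤ ED X Y := hksum
    -- length facts per block
    have hlenX : ∀ i, i < B → (chunk i).length = j (i + 1) - j i := by
      intro i hi
      rw [hchunk]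
      simp only [List.length_drop, List.length_take]
      have := hjn (i + 1) (by omega)
      omega
    have hlenY : ∀ i, i < B → ((Y.drop (k i)).take (k (i + 1) - k i)).length = k (i + 1) - k i := by
      intro i hi
      simp only [List.length_take, List.length_drop, hY]
      have h1 := hkbd i
      have h2 := hkbd (i + 1)
      have h3 := hkmono i
      omega
    have hA : ∀ i, i < B → j (i + 1) - j i ≤ E i + (k (i + 1) - k i) := by
      intro i hi
      have := length_le_ED_left (chunk i) ((Y.drop (k i)).take (k (i + 1) - k i))
      rw [hlenX i hi, hlenY i hi] at this
      exact this
    have hB2 : ∀ i, i < B → k (i + 1) - k i ≤ E i + (j (i + 1) - j i) := by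
      intro i hi
      have := length_le_ED_right (chunk i) ((Y.drop (k i)).take (k (i + 1) - k i))
      rw [hlenX i hi, hlenY i hi] at this
      exact this
    -- the shifts
    refine ⟨fun i => (k i : ℤ) - (j i : ℤ), ?_, ?_⟩
    · -- main sum bound
      have hterm : ∀ i ∈ Finset.range B,
          ED (sub X (j i) (j (i + 1)))
            (sub Y (j i + ((k i : ℤ) - (j i : ℤ))) (j (i + 1) + ((k i : ℤ) - (j i : ℤ))))
          ≤ 2 * E i := by
        intro i hiR
        have hi : i < B := Finset.mem_range.mp hiR
        have hji : j i ≤ j (i + 1) := (hmono i hi).le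
        set m1 := j (i + 1) - j i with hm1
        set m2 := k (i + 1) - k i with hm2
        have hsubX : sub X (j i) (j (i + 1)) = chunk i := by
          simp [sub, hchunk]
        have hsubY : sub Y ((j i : ℤ) + ((k i : ℤ) - (j i : ℤ))) ((j (i + 1) : ℤ) + ((k i : ℤ) - (j i : ℤ)))
            = (Y.drop (k i)).take m1 := by
          have e1 : (j i : ℤ) + ((k i : ℤ) - (j i : ℤ)) = (k i : ℤ) := by ring
          have e2 : (j (i + 1) : ℤ) + ((k i : ℤ) - (j i : ℤ)) = ((k i + m1 : ℕ) : ℤ) := by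
            push_cast; omega
          rw [e1, e2]
          simp only [sub, Int.toNat_natCast]
          rw [List.drop_take]
          congr 1
          omega
        rw [hsubX, hsubY]
        set Z := Y.drop (k i) with hZ
        have hZlen : Z.length = n - k i := by rw [hZ, List.length_drop, hY]
        have hlenY' : (Z.take m2).length = m2 := hlenY i hi
        rcases le_total m1 m2 with hc | hc
        · -- m1 ≤ m2 : Z.take m2 = Z.take m1 ++ T
          have hsplitZ : Z.take m2 = Z.take m1 ++ (Z.take m2).drop m1 := by
            conv_lhs => rw [← List.take_append_drop m1 (Z.take m2)]
            rw [List.take_take, min_eq_left hc]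
          have hTlen : ((Z.take m2).drop m1).length = m2 - m1 := by
            rw [List.length_drop, hlenY']
          have := ED_le_append_right ((Z.take m2).drop m1) (chunk i) (Z.take m1)
          rw [← hsplitZ, hTlen] at this
          have h2 := hB2 i hi
          rw [← hm1, ← hm2] at h2
          have hEi : E i = ED (chunk i) (Z.take m2) := rfl
          omega
        · -- m2 ≤ m1 : Z.take m1 = Z.take m2 ++ T
          have hsplitZ : Z.take m1 = Z.take m2 ++ (Z.take m1).drop m2 := by
            conv_lhs => rw [← List.take_append_drop m2 (Z.take m1)]
            rw [List.take_take, min_eq_left hc]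
          have hTlen : ((Z.take m1).drop m2).length ≤ m1 - m2 := by
            rw [List.length_drop, List.length_take]
            omega
          have := ED_append_right_le ((Z.take m1).drop m2) (chunk i) (Z.take m2)
          rw [← hsplitZ] at this
          have h1 := hA i hi
          rw [← hm1, ← hm2] at h1
          have hEi : E i = ED (chunk i) (Z.take m2) := rfl
          omega
      calc ∑ i ∈ Finset.range B,
            ED (sub X (j i) (j (i + 1)))
              (sub Y (j i + ((k i : ℤ) - (j i : ℤ))) (j (i + 1) + ((k i : ℤ) - (j i : ℤ))))
          ≤ ∑ i ∈ Finset.range B, 2 * E i := Finset.sum_le_sum hterm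
        _ = 2 * ∑ i ∈ Finset.range B, E i := by rw [Finset.mul_sum]
        _ ≤ 2 * ED X Y := Nat.mul_le_mul_left 2 hksum'
    · -- shift bound
      intro i hi
      set g : ℕ → ℤ := fun m => (k m : ℤ) - (j m : ℤ) with hg
      have hg0 : g 0 = 0 := by simp [hg, hk0, hj0]
      have hgB : g B = 0 := by simp [hg, hjB, show k B = n from hkB]
      have habs : ∀ m ∈ Finset.range B, |g (m + 1) - g m| ≤ (E m : ℤ) := by
        intro m hmR
        have hm : m < B := Finset.mem_range.mp hmR
        have h1 := hA m hm
        have h2 := hB2 m hm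
        have hjm : j m ≤ j (m + 1) := (hmono m hm).le
        have hkm : k m ≤ k (m + 1) := hkmono m
        rw [abs_le]
        constructor <;> (simp only [hg]; push_cast; omega)
      have hsum1 : ∑ m ∈ Finset.range i, (g (m + 1) - g m) = g i := by
        rw [Finset.sum_range_sub g i, hg0, sub_zero]
      have hsum2 : ∑ m ∈ Finset.Ico i B, (g (m + 1) - g m) = -(g i) := by
        rw [Finset.sum_Ico_eq_sub _ (le_of_lt hi), Finset.sum_range_sub g, Finset.sum_range_sub g,
          hg0, hgB]
        ring
      have h1 : |g i| ≤ ∑ m ∈ Finset.range i, |g (m + 1) - g m| := by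
        rw [← hsum1]; exact Finset.abs_sum_le_sum_abs _ _
      have h2 : |g i| ≤ ∑ m ∈ Finset.Ico i B, |g (m + 1) - g m| := by
        rw [show |g i| = |∑ m ∈ Finset.Ico i B, (g (m + 1) - g m)| by rw [hsum2, abs_neg]]
        exact Finset.abs_sum_le_sum_abs _ _
      have hsplitsum : ∑ m ∈ Finset.range i, |g (m + 1) - g m| + ∑ m ∈ Finset.Ico i B, |g (m + 1) - g m|
          = ∑ m ∈ Finset.range B, |g (m + 1) - g m| := by
        rw [Finset.sum_Ico_eq_sub _ (le_of_lt hi)]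
        ring
      have hbound : ∑ m ∈ Finset.range B, |g (m + 1) - g m| ≤ ((∑ m ∈ Finset.range B, E m : ℕ) : ℤ) := by
        push_cast
        exact Finset.sum_le_sum habs
      have hfin : 2 * |g i| ≤ (ED X Y : ℤ) := by
        have hc : ((∑ m ∈ Finset.range B, E m : ℕ) : ℤ) ≤ (ED X Y : ℤ) := by
          exact_mod_cast hksum'
        linarith
      have : 2 * ((g i).natAbs : ℤ) ≤ (ED X Y : ℤ) := by
        rw [← Int.abs_eq_natAbs]; exact hfin
      exact_mod_cast this
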